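/- Let Γ be an infinite cardinal and suppose T : ℓ_∞(Γ) → ℓ_∞(Γ) is a bounded operator whose kernel contains ℓ_∞^<(Γ) := {x ∈ ℓ_∞(Γ) : for every ε > 0, the set {γ : |x(γ)| > ε} has cardinality < Γ}. Then there exists an almost disjoint family 𝒜 ⊆ [Γ]^Γ of cardinality greater than Γ such that Y_𝒜 ⊆ ker T. In particular, ℓ_∞^<(Γ) is not the kernel of any bounded operator on ℓ_∞(Γ). -/

import Mathlib

set_option maxHeartbeats 1000000
set_option synthInstance.maxHeartbeats 400000


open Cardinal Set

noncomputable def ind {Γ : Type*} (A : Set Γ) : lp (fun _ : Γ => ℝ) ⊤ :=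
  ⟨A.indicator 1, memℓp_infty ⟨1, by
    rintro r ⟨γ, rfl⟩
    by_cases h : γ ∈ A <;> simp [Set.indicator_apply, h]⟩⟩

def AlmostDisjoint {Γ : Type*} (𝒜 : Set (Set Γ)) : Prop :=
  (∀ A ∈ 𝒜, #A = #Γ) ∧ ∀ A ∈ 𝒜, ∀ B ∈ 𝒜, A ≠ B → #(↥(A ∩ B)) < #Γ

noncomputable def Ysub {Γ : Type*} (𝒜 : Set (Set Γ)) : Submodule ℝ (lp (fun _ : Γ => ℝ) ⊤) :=
  (Submodule.span ℝ
    {y | ∃ (n : ℕ) (A : Fin (n + 1) → Set Γ), (∀ i, A i ∈ 𝒜) ∧ y = ind (⋂ i, A i)}).topologicalClosure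

def Zgen {Γ : Type*} (𝒜 : Set (Set Γ)) : Set (lp (fun _ : Γ => ℝ) ⊤) :=
  {y | ∃ (n : ℕ) (A : Fin (n + 2) → Set Γ),
    (∀ i, A i ∈ 𝒜) ∧ Function.Injective A ∧ y = ind (⋂ i, A i)}

noncomputable def Zsub {Γ : Type*} (𝒜 : Set (Set Γ)) : Submodule ℝ (lp (fun _ : Γ => ℝ) ⊤) :=
  (Submodule.span ℝ (Zgen 𝒜)).topologicalClosure

/-- The subspace $\ell_\infty^{<}(\Gamma)$ of $\ell_\infty(\Gamma)$. -/
def ellLt (Γ : Type*) : Set (lp (fun _ : Γ => ℝ) ⊤) :=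
  {x | ∀ ε : ℝ, 0 < ε → #{γ : Γ | ε < |x γ|} < #Γ}

/-! ### Auxiliary lemmas -/

lemma ind_apply {Γ : Type*} (A : Set Γ) (γ : Γ) :
    (ind A : lp (fun _ : Γ => ℝ) ⊤) γ = A.indicator 1 γ := rfl

lemma compl_nonempty_of_mk_lt {Γ : Type*} {s : Set Γ} (h : #s < #Γ) : sᶜ.Nonempty := by
  rw [Set.nonempty_compl]
  rintro rfl
  simp [Cardinal.mk_univ] at h

lemma ind_mem_ellLt {Γ : Type*} [Infinite Γ] {S : Set Γ} (h : #S < #Γ) : ind S ∈ ellLt Γ := by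
  intro ε hε
  refine lt_of_le_of_lt (Cardinal.mk_le_mk_of_subset ?_) h
  intro γ hγ
  by_contra hs
  have h0 : (ind S : lp (fun _ : Γ => ℝ) ⊤) γ = 0 := by
    rw [ind_apply, Set.indicator_of_notMem hs]
  rw [mem_setOf_eq, h0, abs_zero] at hγ
  exact absurd hγ (not_lt.2 hε.le)

/-! ### Sierpiński: a large almost disjoint family -/

lemma exists_avoid {Γ : Type*} [Infinite Γ] (F : Set (Γ → Γ)) (hF : #F ≤ #Γ) :
    ∃ g : Γ → Γ, ∀ f ∈ F, #{γ | f γ = g γ} < #Γ := by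
  obtain ⟨r, wo, hr⟩ := Cardinal.ord_eq Γ
  obtain ⟨ι⟩ : Nonempty (↥F ↪ Γ) := (Cardinal.le_def _ _).mp hF
  have hseg : ∀ x : Γ, #{y : Γ | r y x} < #Γ := by
    intro x
    have h1 := Cardinal.card_typein_lt (r := r) x hr
    have h2 : #{y : Γ | r y x} = (Ordinal.typein r x).card := Ordinal.card_typein x
    rwa [h2]
  have hsegle : ∀ x : Γ, #{y : Γ | ¬ r x y} < #Γ := by
    intro x
    have hsub : {y : Γ | ¬ r x y} ⊆ insert x {y : Γ | r y x} := by
      intro y hy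
      rcases trichotomous (r := r) y x with h | h | h
      · exact Set.mem_insert_of_mem _ h
      · exact h ▸ Set.mem_insert _ _
      · exact absurd h hy
    refine lt_of_le_of_lt ((Cardinal.mk_le_mk_of_subset hsub).trans Cardinal.mk_insert_le) ?_
    exact Cardinal.add_lt_of_lt (Cardinal.aleph0_le_mk Γ) (hseg x)
      (lt_of_lt_of_le Cardinal.one_lt_aleph0 (Cardinal.aleph0_le_mk Γ))
  set S : Γ → Set Γ := fun γ => (fun f : ↥F => (f : Γ → Γ) γ) '' {f : ↥F | ¬ r γ (ι f)} with hS
  have hSsmall : ∀ γ, #(S γ) < #Γ := by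
    intro γ
    refine lt_of_le_of_lt (Cardinal.mk_image_le) ?_
    refine lt_of_le_of_lt ?_ (hsegle γ)
    exact Cardinal.mk_le_of_injective (f := fun f : {f : ↥F | ¬ r γ (ι f)} =>
      (⟨ι f.1, f.2⟩ : {y : Γ | ¬ r γ y})) (by
        intro a b hab
        exact Subtype.ext (ι.injective (congrArg Subtype.val hab)))
  choose g hg using fun γ => compl_nonempty_of_mk_lt (hSsmall γ)
  refine ⟨g, ?_⟩
  intro f hf
  refine lt_of_le_of_lt (Cardinal.mk_le_mk_of_subset (t := {γ | r γ (ι ⟨f, hf⟩)}) ?_) (hseg _)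
  intro γ hγ
  by_contra hc
  have hmem : f γ ∈ S γ := ⟨⟨f, hf⟩, hc, rfl⟩
  have := hg γ
  rw [Set.mem_compl_iff] at this
  exact this (hγ ▸ hmem)

lemma exists_bigF {Γ : Type*} [Infinite Γ] :
    ∃ F : Set (Γ → Γ), #Γ < #F ∧
      ∀ f ∈ F, ∀ g ∈ F, f ≠ g → #{γ | f γ = g γ} < #Γ := by
  set 𝒮 : Set (Set (Γ → Γ)) :=
    {F | ∀ f ∈ F, ∀ g ∈ F, f ≠ g → #{γ | f γ = g γ} < #Γ} with h𝒮
  obtain ⟨M, hM⟩ := zorn_subset 𝒮 (fun c hc hchain => by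
    refine ⟨⋃₀ c, ?_, fun s hs => Set.subset_sUnion_of_mem hs⟩
    intro f hf g hg hne
    obtain ⟨F₁, hF₁, hf₁⟩ := hf
    obtain ⟨F₂, hF₂, hg₂⟩ := hg
    rcases hchain.total hF₁ hF₂ with h | h
    · exact hc hF₂ f (h hf₁) g hg₂ hne
    · exact hc hF₁ f hf₁ g (h hg₂) hne)
  refine ⟨M, ?_, hM.prop⟩
  by_contra hle
  push_neg at hle
  obtain ⟨g, hg⟩ := exists_avoid M hle
  have hgM : g ∉ M := by
    intro hmem
    have := hg g hmem
    simp only [Set.setOf_true, Cardinal.mk_univ] at this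
    exact lt_irrefl _ this
  have hins : insert g M ∈ 𝒮 := by
    intro f₁ hf₁ f₂ hf₂ hne
    rcases hf₁ with rfl | hf₁ <;> rcases hf₂ with rfl | hf₂
    · exact absurd rfl hne
    · have hset : {γ | f₁ γ = f₂ γ} = {γ | f₂ γ = f₁ γ} := by
        ext γ; exact eq_comm
      rw [hset]
      exact hg f₂ hf₂
    · exact hg f₁ hf₁
    · exact hM.prop f₁ hf₁ f₂ hf₂ hne
  exact hgM (hM.2 hins (Set.subset_insert g M) (Set.mem_insert g M))

lemma exists_ad {Γ : Type*} [Infinite Γ] :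
    ∃ 𝒜 : Set (Set Γ), AlmostDisjoint 𝒜 ∧ #Γ < #𝒜 := by
  obtain ⟨F, hFbig, hF⟩ := exists_bigF (Γ := Γ)
  have hmk : #(Γ × Γ) = #Γ := by
    simp [Cardinal.mul_eq_self (Cardinal.aleph0_le_mk Γ)]
  obtain ⟨e⟩ : Nonempty (Γ × Γ ≃ Γ) := Cardinal.eq.mp hmk
  set graph : (Γ → Γ) → Set (Γ × Γ) := fun f => {p | p.2 = f p.1} with hgraph
  have hgraphmk : ∀ f : Γ → Γ, #(graph f) = #Γ := by
    intro f
    refine (Cardinal.mk_congr (Equiv.ofBijective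
      (fun γ : Γ => (⟨(γ, f γ), rfl⟩ : graph f)) ⟨?_, ?_⟩)).symm
    · intro a b hab
      exact congrArg (fun q : graph f => q.1.1) hab
    · rintro ⟨⟨γ, y⟩, (hy : y = f γ)⟩
      exact ⟨γ, by simp [hy]⟩
  have hgraphinj : Function.Injective graph := by
    intro f g hfg
    funext γ
    have hmem : (γ, f γ) ∈ graph g := hfg ▸ (rfl : (γ, f γ) ∈ graph f)
    simp only [hgraph, Set.mem_setOf_eq] at hmem
    exact hmem
  set G : (Γ → Γ) → Set Γ := fun f => e '' graph f with hG
  have hGinj : Function.Injective G := fun f g h =>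
    hgraphinj (Set.image_injective.mpr e.injective h)
  refine ⟨G '' F, ⟨?_, ?_⟩, ?_⟩
  · rintro A ⟨f, hf, rfl⟩
    rw [Cardinal.mk_image_eq e.injective]
    exact hgraphmk f
  · rintro A ⟨f, hf, rfl⟩ B ⟨g, hg, rfl⟩ hne
    have hfg : f ≠ g := fun h => hne (h ▸ rfl)
    have hint : G f ∩ G g = e '' (graph f ∩ graph g) :=
      (Set.image_inter e.injective).symm
    rw [hint, Cardinal.mk_image_eq e.injective]
    have hcong : #{γ | f γ = g γ} = #(↥(graph f ∩ graph g)) := by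
      refine Cardinal.mk_congr (Equiv.ofBijective
        (fun q : {γ | f γ = g γ} =>
          (⟨(q.1, f q.1), rfl, q.2⟩ : ↥(graph f ∩ graph g))) ⟨?_, ?_⟩)
      · intro a b hab
        exact Subtype.ext (congrArg (fun q : ↥(graph f ∩ graph g) => q.1.1) hab)
      · rintro ⟨⟨γ, y⟩, h1, h2⟩
        refine ⟨⟨γ, ?_⟩, ?_⟩
        · show f γ = g γ
          rw [← (h1 : y = f γ), ← (h2 : y = g γ)]
        · apply Subtype.ext
          show (γ, f γ) = (γ, y)
          have hy : y = f γ := h1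
          rw [hy]
    rw [← hcong]
    exact hF f hf g hg hfg
  · rwa [Cardinal.mk_image_eq hGinj]

/-! ### The analytic part -/

lemma mk_biUnion_lt {Γ : Type*} {ι : Type*} [Infinite Γ] (s : Finset ι) (f : ι → Set Γ)
    (h : ∀ i ∈ s, #(f i) < #Γ) : #(⋃ i ∈ s, f i) < #Γ := by
  classical
  induction s using Finset.induction_on with
  | empty =>
    simp only [Finset.notMem_empty, Set.iUnion_of_empty, Set.iUnion_empty]
    simpa using Cardinal.aleph0_pos.trans_le (Cardinal.aleph0_le_mk Γ)
  | @insert a s ha ih =>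
    rw [Finset.set_biUnion_insert]
    refine lt_of_le_of_lt (Cardinal.mk_union_le _ _) ?_
    exact Cardinal.add_lt_of_lt (Cardinal.aleph0_le_mk Γ)
      (h a (Finset.mem_insert_self a s))
      (ih fun i hi => h i (Finset.mem_insert_of_mem hi))

lemma ind_diff_eq {Γ : Type*} (A U : Set Γ) :
    (ind A : lp (fun _ : Γ => ℝ) ⊤) - ind (A \ U) = ind (A ∩ U) := by
  apply Subtype.ext
  funext δ
  have : ((ind A - ind (A \ U) : lp (fun _ : Γ => ℝ) ⊤) : ∀ _ : Γ, ℝ) δ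
      = (ind A : lp (fun _ : Γ => ℝ) ⊤) δ - (ind (A \ U) : lp (fun _ : Γ => ℝ) ⊤) δ := by
    rw [lp.coeFn_sub]; rfl
  rw [this]
  simp only [ind_apply, Set.indicator_apply, Set.mem_diff, Set.mem_inter_iff]
  by_cases h1 : δ ∈ A <;> by_cases h2 : δ ∈ U <;> simp [h1, h2]

lemma sum_abs_le {Γ : Type*} [Infinite Γ]
    (T : lp (fun _ : Γ => ℝ) ⊤ →L[ℝ] lp (fun _ : Γ => ℝ) ⊤)
    (hker : ∀ x ∈ ellLt Γ, T x = 0) {𝒜 : Set (Set Γ)} (had : AlmostDisjoint 𝒜)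
    (t : Finset (Set Γ)) (ht : ↑t ⊆ 𝒜) (γ : Γ) :
    ∑ A ∈ t, |(T (ind A)) γ| ≤ ‖T‖ := by
  classical
  set D : Set Γ → Set Γ := fun A => A \ ⋃ B ∈ t.erase A, (B : Set Γ) with hD
  have hTD : ∀ A ∈ t, T (ind (D A)) = T (ind A) := by
    intro A hA
    have hsmall : #(A ∩ ⋃ B ∈ t.erase A, (B : Set Γ) : Set Γ) < #Γ := by
      have heq : (A ∩ ⋃ B ∈ t.erase A, (B : Set Γ)) = ⋃ B ∈ t.erase A, (A ∩ B) := by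
        rw [Set.inter_iUnion₂]
      rw [heq]
      refine mk_biUnion_lt _ _ fun B hB => ?_
      exact had.2 A (ht hA) B (ht (Finset.mem_of_mem_erase hB))
        (Ne.symm (Finset.ne_of_mem_erase hB))
    have h0 : T (ind (A ∩ ⋃ B ∈ t.erase A, (B : Set Γ))) = 0 :=
      hker _ (ind_mem_ellLt hsmall)
    have := congrArg T (ind_diff_eq A (⋃ B ∈ t.erase A, (B : Set Γ)))
    rw [map_sub, h0, sub_eq_zero] at this
    exact this.symm
  set sgn : Set Γ → ℝ := fun A => if 0 ≤ (T (ind A)) γ then 1 else -1 with hsgn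
  have hsgn1 : ∀ A, |sgn A| = 1 := by
    intro A
    by_cases h : 0 ≤ (T (ind A)) γ <;> simp [hsgn, h]
  set x : lp (fun _ : Γ => ℝ) ⊤ := ∑ A ∈ t, sgn A • ind (D A) with hx
  have hDdisj : ∀ A ∈ t, ∀ B ∈ t, A ≠ B → ∀ δ, δ ∈ D A → δ ∉ D B := by
    intro A hA B hB hne δ hδA hδB
    have hAB : A ∈ t.erase B := Finset.mem_erase.mpr ⟨hne, hA⟩
    exact hδB.2 (Set.mem_biUnion hAB hδA.1)
  have hxco : ∀ δ, x δ = ∑ A ∈ t, sgn A * (D A).indicator 1 δ := by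
    intro δ
    rw [hx]
    rw [lp.coeFn_sum]
    rw [Finset.sum_apply]
    refine Finset.sum_congr rfl fun A _ => ?_
    rw [lp.coeFn_smul, Pi.smul_apply, ind_apply, smul_eq_mul]
  have hxnorm : ‖x‖ ≤ 1 := by
    refine lp.norm_le_of_forall_le zero_le_one fun δ => ?_
    rw [Real.norm_eq_abs, hxco δ]
    by_cases hex : ∃ A ∈ t, δ ∈ D A
    · obtain ⟨A₀, hA₀, hδ⟩ := hex
      rw [Finset.sum_eq_single_of_mem A₀ hA₀ (fun B hB hBne => by
        have : δ ∉ D B := hDdisj A₀ hA₀ B hB (Ne.symm hBne) δ hδ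
        simp [Set.indicator_of_notMem this])]
      rw [Set.indicator_of_mem hδ, Pi.one_apply, mul_one]
      exact le_of_eq (hsgn1 A₀)
    · push_neg at hex
      rw [Finset.sum_eq_zero fun A hA => by
        simp [Set.indicator_of_notMem (hex A hA)]]
      simp
  have hTx : (T x) γ = ∑ A ∈ t, |(T (ind A)) γ| := by
    have h1 : T x = ∑ A ∈ t, sgn A • T (ind A) := by
      rw [hx, map_sum]
      refine Finset.sum_congr rfl fun A hA => ?_
      rw [map_smul, hTD A hA]
    have h2 : (T x) γ = ∑ A ∈ t, sgn A * (T (ind A)) γ := by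
      rw [h1, lp.coeFn_sum, Finset.sum_apply]
      refine Finset.sum_congr rfl fun A _ => ?_
      rw [lp.coeFn_smul, Pi.smul_apply, smul_eq_mul]
    rw [h2]
    refine Finset.sum_congr rfl fun A _ => ?_
    by_cases h : 0 ≤ (T (ind A)) γ
    · rw [hsgn]; simp only [if_pos h, one_mul]; exact (abs_of_nonneg h).symm
    · rw [hsgn]; simp only [if_neg h, neg_one_mul]
      exact (abs_of_neg (not_le.mp h)).symm
  calc ∑ A ∈ t, |(T (ind A)) γ| = (T x) γ := hTx.symm
    _ ≤ |(T x) γ| := le_abs_self _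
    _ ≤ ‖T x‖ := by
        have := lp.norm_apply_le_norm ENNReal.top_ne_zero (T x) γ
        rwa [Real.norm_eq_abs] at this
    _ ≤ ‖T‖ * ‖x‖ := T.le_opNorm x
    _ ≤ ‖T‖ * 1 := mul_le_mul_of_nonneg_left hxnorm (norm_nonneg T)
    _ = ‖T‖ := mul_one _

lemma bad_finite {Γ : Type*} [Infinite Γ]
    (T : lp (fun _ : Γ => ℝ) ⊤ →L[ℝ] lp (fun _ : Γ => ℝ) ⊤)
    (hker : ∀ x ∈ ellLt Γ, T x = 0) {𝒜 : Set (Set Γ)} (had : AlmostDisjoint 𝒜)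
    (γ : Γ) {c : ℝ} (hc : 0 < c) :
    {A | A ∈ 𝒜 ∧ c < |(T (ind A)) γ|}.Finite := by
  classical
  by_contra hfin
  have hinf : {A | A ∈ 𝒜 ∧ c < |(T (ind A)) γ|}.Infinite := hfin
  obtain ⟨n, hn⟩ := exists_nat_gt (‖T‖ / c)
  obtain ⟨s, hs, hsfin, hscard⟩ := hinf.exists_subset_ncard_eq n
  set t := hsfin.toFinset with htdef
  have htsub : ↑t ⊆ 𝒜 := by
    intro A hA
    rw [htdef, Set.Finite.coe_toFinset] at hA
    exact (hs hA).1
  have htcard : t.card = n := by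
    rw [htdef, ← Set.ncard_coe_finset, Set.Finite.coe_toFinset]
    exact hscard
  have hsum := sum_abs_le T hker had t htsub γ
  have hlower : (n : ℝ) * c ≤ ∑ A ∈ t, |(T (ind A)) γ| := by
    calc (n : ℝ) * c = ∑ _A ∈ t, c := by rw [Finset.sum_const, htcard, nsmul_eq_mul]
      _ ≤ ∑ A ∈ t, |(T (ind A)) γ| := by
          refine Finset.sum_le_sum fun A hA => ?_
          have : A ∈ s := by rwa [htdef, Set.Finite.mem_toFinset] at hA
          exact (hs this).2.le
  have : ‖T‖ < (n : ℝ) * c := (div_lt_iff₀ hc).mp hn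
  linarith

lemma main_aux {Γ : Type*} [Infinite Γ]
    (T : lp (fun _ : Γ => ℝ) ⊤ →L[ℝ] lp (fun _ : Γ => ℝ) ⊤)
    (hker : ∀ x ∈ ellLt Γ, T x = 0) :
    ∃ 𝒜 : Set (Set Γ), AlmostDisjoint 𝒜 ∧ #Γ < #𝒜 ∧ ∀ y ∈ Ysub 𝒜, T y = 0 := by
  classical
  obtain ⟨𝒜, had, hbig⟩ := exists_ad (Γ := Γ)
  set good : Set (Set Γ) := {A | A ∈ 𝒜 ∧ T (ind A) = 0} with hgood
  set bad : Set (Set Γ) := {A | A ∈ 𝒜 ∧ T (ind A) ≠ 0} with hbad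
  have hbadsub : bad ⊆ ⋃ p : Γ × ℕ, {A | A ∈ 𝒜 ∧ 1 / ((p.2 : ℝ) + 1) < |(T (ind A)) p.1|} := by
    rintro A ⟨hA, hne⟩
    have : ∃ γ : Γ, (T (ind A)) γ ≠ 0 := by
      by_contra hall
      push_neg at hall
      exact hne (by
        apply Subtype.ext
        funext δ
        simpa using hall δ)
    obtain ⟨γ, hγ⟩ := this
    obtain ⟨n, hn⟩ := exists_nat_one_div_lt (abs_pos.mpr hγ)
    exact Set.mem_iUnion.mpr ⟨(γ, n), hA, hn⟩
  have hbadcard : #bad ≤ #Γ := by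
    refine le_trans (Cardinal.mk_le_mk_of_subset hbadsub) ?_
    refine le_trans (Cardinal.mk_iUnion_le _) ?_
    have h1 : #(Γ × ℕ) ≤ #Γ := by
      rw [Cardinal.mk_prod, Cardinal.lift_uzero, Cardinal.mk_nat, Cardinal.lift_aleph0,
        Cardinal.mul_aleph0_eq (Cardinal.aleph0_le_mk Γ)]
    have h2 : ⨆ p : Γ × ℕ, #{A | A ∈ 𝒜 ∧ 1 / ((p.2 : ℝ) + 1) < |(T (ind A)) p.1|} ≤ #Γ := by
      refine ciSup_le' fun p => ?_
      have hfin := bad_finite T hker had p.1 (c := 1 / ((p.2 : ℝ) + 1)) (by positivity)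
      exact le_trans (le_of_lt hfin.lt_aleph0) (Cardinal.aleph0_le_mk Γ)
    calc #(Γ × ℕ) * ⨆ p : Γ × ℕ, #{A | A ∈ 𝒜 ∧ 1 / ((p.2 : ℝ) + 1) < |(T (ind A)) p.1|}
        ≤ #Γ * #Γ := mul_le_mul' h1 h2
      _ = #Γ := Cardinal.mul_eq_self (Cardinal.aleph0_le_mk Γ)
  have hsplit : 𝒜 = good ∪ bad := by
    ext A
    constructor
    · intro hA
      by_cases h : T (ind A) = 0
      · exact Or.inl ⟨hA, h⟩
      · exact Or.inr ⟨hA, h⟩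
    · rintro (⟨hA, -⟩ | ⟨hA, -⟩) <;> exact hA
  have hgoodbig : #Γ < #good := by
    by_contra h
    push_neg at h
    have : #𝒜 ≤ #Γ := by
      rw [hsplit]
      refine le_trans (Cardinal.mk_union_le _ _) ?_
      refine le_trans (add_le_add h hbadcard) ?_
      exact le_of_eq (Cardinal.add_eq_self (Cardinal.aleph0_le_mk Γ))
    exact absurd hbig (not_lt.mpr this)
  have hgoodad : AlmostDisjoint good :=
    ⟨fun A hA => had.1 A hA.1, fun A hA B hB hne => had.2 A hA.1 B hB.1 hne⟩
  refine ⟨good, hgoodad, hgoodbig, ?_⟩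
  have hle : Ysub good ≤ LinearMap.ker (T : lp (fun _ : Γ => ℝ) ⊤ →ₗ[ℝ] lp (fun _ : Γ => ℝ) ⊤) := by
    refine Submodule.topologicalClosure_minimal _ (Submodule.span_le.mpr ?_)
      (ContinuousLinearMap.isClosed_ker T)
    rintro y ⟨n, A, hA, rfl⟩
    rw [SetLike.mem_coe, LinearMap.mem_ker]
    by_cases hconst : ∀ i, A i = A 0
    · have hiA : (⋂ i, A i) = A 0 := by
        apply Set.Subset.antisymm
        · exact Set.iInter_subset A 0
        · intro γ hγ
          exact Set.mem_iInter.mpr fun i => (hconst i) ▸ hγ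
      rw [hiA]
      exact (hA 0).2
    · push_neg at hconst
      obtain ⟨i, hi⟩ := hconst
      have hsub : (⋂ j, A j) ⊆ A 0 ∩ A i :=
        Set.subset_inter (Set.iInter_subset A 0) (Set.iInter_subset A i)
      have hsmall : #(⋂ j, A j : Set Γ) < #Γ :=
        lt_of_le_of_lt (Cardinal.mk_le_mk_of_subset hsub)
          (hgoodad.2 (A 0) (hA 0) (A i) (hA i) (Ne.symm hi))
      exact hker _ (ind_mem_ellLt hsmall)
  intro y hy
  exact LinearMap.mem_ker.mp (hle hy)

theorem kernel_containing_ellLt_contains_Ysub {Γ : Type*} [Infinite Γ]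
    (T : lp (fun _ : Γ => ℝ) ⊤ →L[ℝ] lp (fun _ : Γ => ℝ) ⊤)
    (hker : ∀ x ∈ ellLt Γ, T x = 0) :
    (∃ 𝒜 : Set (Set Γ), AlmostDisjoint 𝒜 ∧ #Γ < #𝒜 ∧ ∀ y ∈ Ysub 𝒜, T y = 0) ∧
    ∀ S : lp (fun _ : Γ => ℝ) ⊤ →L[ℝ] lp (fun _ : Γ => ℝ) ⊤,
      (LinearMap.ker (S : lp (fun _ : Γ => ℝ) ⊤ →ₗ[ℝ] lp (fun _ : Γ => ℝ) ⊤) : Set (lp (fun _ : Γ => ℝ) ⊤)) ≠ ellLt Γ := by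
  refine ⟨main_aux T hker, ?_⟩
  intro S heq
  have hker' : ∀ x ∈ ellLt Γ, S x = 0 := by
    intro x hx
    rw [← heq] at hx
    exact LinearMap.mem_ker.mp hx
  obtain ⟨𝒜, had, hbig, hY⟩ := main_aux S hker'
  have hne : Nonempty ↥𝒜 := Cardinal.mk_ne_zero_iff.mp
    (ne_of_gt (lt_of_le_of_lt (zero_le (a := #Γ)) hbig))
  obtain ⟨⟨A, hA⟩⟩ := hne
  have hmem : ind A ∈ Ysub 𝒜 := by
    apply Submodule.le_topologicalClosure
    apply Submodule.subset_span
    exact ⟨0, fun _ => A, fun _ => hA, by rw [Set.iInter_const]⟩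
  have hSA : S (ind A) = 0 := hY (ind A) hmem
  have hmem' : ind A ∈ ellLt Γ := by
    rw [← heq]
    exact LinearMap.mem_ker.mpr hSA
  have hsmall := hmem' (1 / 2) (by norm_num)
  have hAsub : A ⊆ {γ : Γ | 1 / 2 < |(ind A : lp (fun _ : Γ => ℝ) ⊤) γ|} := by
    intro γ hγ
    have : (ind A : lp (fun _ : Γ => ℝ) ⊤) γ = 1 := by
      rw [ind_apply, Set.indicator_of_mem hγ, Pi.one_apply]
    rw [mem_setOf_eq, this]
    norm_num
  have : #Γ ≤ #{γ : Γ | 1 / 2 < |(ind A : lp (fun _ : Γ => ℝ) ⊤) γ|} :=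
    le_trans (le_of_eq (had.1 A hA).symm) (Cardinal.mk_le_mk_of_subset hAsub)
  exact absurd hsmall (not_lt.mpr this)
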